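/- Let G be a finite group that is a central product of A and B. If there exist H ≤ A and K ≤ B with HK ∈ CD(G), then for all X ∈ CD(A) and Y ∈ CD(B), the product XY lies in CD(G); that is, CD(A)·CD(B) ⊆ CD(G). -/
import Mathlib

open scoped Pointwise

/-- Relative Chermak–Delgado measure `m_W(K) = |K| * |C_W(K)|`. -/
noncomputable def m {G : Type*} [Group G] (W K : Subgroup G) : ℕ :=
  Nat.card K * Nat.card (W ⊓ Subgroup.centralizer (K : Set G) : Subgroup G)

/-- The Chermak–Delgado lattice of `W`: subgroups of `W` maximizing `m W`. -/
def CD {G : Type*} [Group G] (W : Subgroup G) : Set (Subgroup G) :=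
  {K | K ≤ W ∧ ∀ L ≤ W, m W L ≤ m W K}

/-- `m*(W)`, the maximal Chermak–Delgado measure over subgroups of `W`. -/
noncomputable def mstar {G : Type*} [Group G] (W : Subgroup G) : ℕ :=
  ⨆ K : {K : Subgroup G // K ≤ W}, m W K

section Aux

open Subgroup

variable {G : Type*} [Group G]

lemma myCentSup (H K : Subgroup G) :
    centralizer ((H ⊔ K : Subgroup G) : Set G) =
      centralizer (H : Set G) ⊓ centralizer (K : Set G) := by
  refine le_antisymm
    (le_inf (centralizer_le (SetLike.coe_subset_coe.2 le_sup_left))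
      (centralizer_le (SetLike.coe_subset_coe.2 le_sup_right))) ?_
  intro g hg
  exact zpowers_le.1 (le_centralizer_iff.2 (sup_le
    (le_centralizer_iff.1 (zpowers_le.2 hg.1))
    (le_centralizer_iff.1 (zpowers_le.2 hg.2))))

lemma myCardSupMul [Finite G] (H K : Subgroup G)
    (hc : ∀ h ∈ H, ∀ k ∈ K, h * k = k * h) :
    Nat.card (H ⊔ K : Subgroup G) * Nat.card (H ⊓ K : Subgroup G) =
      Nat.card H * Nat.card K := by
  let φ : H × K →* G :=
    { toFun := fun p => (p.1 : G) * p.2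
      map_one' := by simp
      map_mul' := by
        rintro ⟨a, b⟩ ⟨c, d⟩
        have hbc : (c : G) * b = (b : G) * c := hc c c.2 b b.2
        show ((a * c : H) : G) * ((b * d : K) : G) = _
        push_cast
        rw [mul_assoc, ← mul_assoc (c : G), hbc, mul_assoc, mul_assoc] }
  have hφ : ∀ p : H × K, φ p = (p.1 : G) * p.2 := fun p => rfl
  have hrange : φ.range = H ⊔ K := by
    apply le_antisymm
    · rintro x ⟨⟨a, b⟩, rfl⟩
      exact mul_mem (le_sup_left (a := H) a.2) (le_sup_right (b := K) b.2)
    · apply sup_le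
      · intro x hx; exact ⟨(⟨⟨x, hx⟩, 1⟩ : H × K), by simp [hφ]⟩
      · intro x hx; exact ⟨(⟨1, ⟨x, hx⟩⟩ : H × K), by simp [hφ]⟩
  have hker : Nat.card φ.ker = Nat.card (H ⊓ K : Subgroup G) := by
    apply Nat.card_congr
    refine ⟨fun p => ⟨((p : H × K).1 : G), (p : H × K).1.2, ?_⟩,
      fun z => ⟨⟨⟨(z : G), z.2.1⟩, ⟨(z : G)⁻¹, inv_mem z.2.2⟩⟩, ?_⟩, ?_, ?_⟩
    · have h1 : ((p : H × K).1 : G) * ((p : H × K).2 : G) = 1 := p.2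
      have h2 : ((p : H × K).1 : G) = (((p : H × K).2 : G))⁻¹ :=
        eq_inv_of_mul_eq_one_left h1
      rw [h2]
      exact K.inv_mem (p : H × K).2.2
    · show φ _ = 1
      rw [hφ]; simp
    · rintro ⟨⟨a, b⟩, hab⟩
      have h1 : (a : G) * (b : G) = 1 := hab
      have hb : (b : G) = (a : G)⁻¹ := eq_inv_of_mul_eq_one_right h1
      ext <;> simp [hb]
    · intro z; rfl
  have h1 : Nat.card (H × K) = Nat.card (H ⊔ K : Subgroup G) * Nat.card φ.ker := by
    rw [card_eq_card_quotient_mul_card_subgroup φ.ker, ← hrange]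
    congr 1
    exact Nat.card_congr (QuotientGroup.quotientKerEquivRange φ).toEquiv
  rw [← hker, ← h1, Nat.card_prod]

end Aux

theorem stmt11 {G : Type*} [Group G] [Finite G] (A B : Subgroup G)
    (hG : ∀ g : G, ∃ a ∈ A, ∃ b ∈ B, g = a * b)
    (hcomm : ∀ a ∈ A, ∀ b ∈ B, a * b = b * a)
    (hex : ∃ H K : Subgroup G, H ≤ A ∧ K ≤ B ∧ H ⊔ K ∈ CD (⊤ : Subgroup G)) :
    ∀ X ∈ CD A, ∀ Y ∈ CD B, X ⊔ Y ∈ CD (⊤ : Subgroup G) := by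
  classical
  obtain ⟨H, K, hHA, hKB, hHKle, hHKmax⟩ := hex
  set Z : Subgroup G := A ⊓ B with hZ
  -- Z is central
  have hZcenter : Z ≤ Subgroup.center G := by
    intro z hz
    rw [Subgroup.mem_center_iff]
    intro g
    obtain ⟨a, ha, b, hb, rfl⟩ := hG g
    have h1 : a * z = z * a := hcomm a ha z hz.2
    have h2 : z * b = b * z := hcomm z hz.1 b hb
    calc a * b * z = a * (b * z) := by rw [mul_assoc]
      _ = a * (z * b) := by rw [h2]
      _ = (a * z) * b := by rw [mul_assoc]
      _ = (z * a) * b := by rw [h1]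
      _ = z * (a * b) := by rw [mul_assoc]
  have hZcent : ∀ s : Set G, Z ≤ Subgroup.centralizer s :=
    fun s => hZcenter.trans (Subgroup.center_le_centralizer s)
  have hZtop : Subgroup.centralizer (Z : Set G) = ⊤ :=
    Subgroup.centralizer_eq_top_iff_subset.2 hZcenter
  -- measure over ⊤ simplifies
  have hmtop : ∀ W : Subgroup G,
      m ⊤ W = Nat.card W * Nat.card (Subgroup.centralizer (W : Set G)) := by
    intro W; rw [m, top_inf_eq]
  -- adjoining Z doesn't decrease the top measure
  have hsupZ : ∀ M : Subgroup G, m ⊤ M ≤ m ⊤ (M ⊔ Z) := by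
    intro M
    rw [hmtop, hmtop, myCentSup, hZtop, inf_top_eq]
    exact Nat.mul_le_mul_right _ (Subgroup.card_le_of_le le_sup_left)
  -- key computation
  have hcomp : ∀ H' K' : Subgroup G, H' ≤ A → K' ≤ B →
      m ⊤ (H' ⊔ K') * (Nat.card (H' ⊓ K' : Subgroup G) * Nat.card Z) =
        m A H' * m B K' := by
    intro H' K' hH' hK'
    have e1 : Nat.card (H' ⊔ K' : Subgroup G) * Nat.card (H' ⊓ K' : Subgroup G) =
        Nat.card H' * Nat.card K' :=
      myCardSupMul H' K' (fun h hh k hk => hcomm h (hH' hh) k (hK' hk))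
    have e2 : Subgroup.centralizer ((H' ⊔ K' : Subgroup G) : Set G) =
        (A ⊓ Subgroup.centralizer (H' : Set G)) ⊔ (B ⊓ Subgroup.centralizer (K' : Set G)) := by
      apply le_antisymm
      · intro g hg
        rw [myCentSup] at hg
        obtain ⟨a, ha, b, hb, rfl⟩ := hG g
        have hga : a ∈ A ⊓ Subgroup.centralizer (H' : Set G) := by
          refine ⟨ha, Subgroup.mem_centralizer_iff.2 fun x hx => ?_⟩
          have hx1 : x * (a * b) = (a * b) * x := hg.1 x hx
          have hx2 : x * b = b * x := hcomm x (hH' hx) b hb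
          have : x * a * b = a * x * b := by
            calc x * a * b = x * (a * b) := by rw [mul_assoc]
              _ = a * b * x := hx1
              _ = a * (b * x) := by rw [mul_assoc]
              _ = a * (x * b) := by rw [hx2]
              _ = a * x * b := by rw [mul_assoc]
          exact mul_right_cancel this
        have hgb : b ∈ B ⊓ Subgroup.centralizer (K' : Set G) := by
          refine ⟨hb, Subgroup.mem_centralizer_iff.2 fun y hy => ?_⟩
          have hy1 : y * (a * b) = (a * b) * y := hg.2 y hy
          have hy2 : a * y = y * a := hcomm a ha y (hK' hy)
          have : a * (y * b) = a * (b * y) := by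
            calc a * (y * b) = (a * y) * b := by rw [mul_assoc]
              _ = (y * a) * b := by rw [hy2]
              _ = y * (a * b) := by rw [mul_assoc]
              _ = (a * b) * y := hy1
              _ = a * (b * y) := by rw [mul_assoc]
          exact mul_left_cancel this
        exact mul_mem (Subgroup.mem_sup_left hga) (Subgroup.mem_sup_right hgb)
      · apply sup_le
        · rw [myCentSup]
          refine le_inf (fun x hx => hx.2) ?_
          intro x hx
          exact Subgroup.mem_centralizer_iff.2 fun y hy => hcomm x hx.1 y (hK' hy) ▸
            (hcomm x hx.1 y (hK' hy)).symm
        · rw [myCentSup]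
          refine le_inf ?_ (fun x hx => hx.2)
          intro x hx
          exact Subgroup.mem_centralizer_iff.2 fun y hy => (hcomm y (hH' hy) x hx.1)
    have e4 : (A ⊓ Subgroup.centralizer (H' : Set G)) ⊓
        (B ⊓ Subgroup.centralizer (K' : Set G)) = Z := by
      apply le_antisymm
      · exact le_inf (inf_le_left.trans inf_le_left) (inf_le_right.trans inf_le_left)
      · exact le_inf (le_inf inf_le_left (hZcent _)) (le_inf inf_le_right (hZcent _))
    have e3 : Nat.card ((A ⊓ Subgroup.centralizer (H' : Set G)) ⊔
          (B ⊓ Subgroup.centralizer (K' : Set G)) : Subgroup G) * Nat.card Z =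
        Nat.card (A ⊓ Subgroup.centralizer (H' : Set G) : Subgroup G) *
          Nat.card (B ⊓ Subgroup.centralizer (K' : Set G) : Subgroup G) := by
      rw [← e4]
      exact myCardSupMul _ _ (fun h hh k hk => hcomm h hh.1 k hk.1)
    rw [hmtop, m, m, e2, mul_mul_mul_comm, e1, e3, mul_mul_mul_comm]
  -- positivity of cards
  have hpos : ∀ W : Subgroup G, 0 < Nat.card W := fun W => Nat.card_pos
  intro X hX Y hY
  refine ⟨le_top, fun L _ => ?_⟩
  set H' : Subgroup G := H ⊔ Z
  set K' : Subgroup G := K ⊔ Z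
  have hH'A : H' ≤ A := sup_le hHA inf_le_left
  have hK'B : K' ≤ B := sup_le hKB inf_le_right
  have hH'K' : H' ⊓ K' = Z :=
    le_antisymm (inf_le_inf hH'A hK'B) (le_inf le_sup_right le_sup_right)
  have hsup : H' ⊔ K' = (H ⊔ K) ⊔ Z := by
    rw [sup_sup_sup_comm, sup_idem]
  have step1 : m ⊤ L ≤ m ⊤ (H' ⊔ K') := by
    calc m ⊤ L ≤ m ⊤ (H ⊔ K) := hHKmax L le_top
      _ ≤ m ⊤ ((H ⊔ K) ⊔ Z) := hsupZ _
      _ = m ⊤ (H' ⊔ K') := by rw [hsup]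
  have hXY_le : Nat.card (X ⊓ Y : Subgroup G) ≤ Nat.card Z :=
    Subgroup.card_le_of_le (inf_le_inf hX.1 hY.1)
  have key : m ⊤ L * (Nat.card (X ⊓ Y : Subgroup G) * Nat.card Z) ≤
      m ⊤ (X ⊔ Y) * (Nat.card (X ⊓ Y : Subgroup G) * Nat.card Z) := by
    calc m ⊤ L * (Nat.card (X ⊓ Y : Subgroup G) * Nat.card Z)
        ≤ m ⊤ (H' ⊔ K') * (Nat.card Z * Nat.card Z) :=
          Nat.mul_le_mul step1 (Nat.mul_le_mul_right _ hXY_le)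
      _ = m ⊤ (H' ⊔ K') * (Nat.card (H' ⊓ K' : Subgroup G) * Nat.card Z) := by rw [hH'K']
      _ = m A H' * m B K' := hcomp H' K' hH'A hK'B
      _ ≤ m A X * m B Y :=
          Nat.mul_le_mul (hX.2 H' hH'A) (hY.2 K' hK'B)
      _ = m ⊤ (X ⊔ Y) * (Nat.card (X ⊓ Y : Subgroup G) * Nat.card Z) :=
          (hcomp X Y hX.1 hY.1).symm
  exact Nat.le_of_mul_le_mul_right key (Nat.mul_pos (hpos _) (hpos _))
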